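/- Let n ≥ 1 and let x₁, …, xₙ be nonnegative real numbers such that xᵢ ≥ x_{i+1} + x_{i+2} + ⋯ + xₙ for every i with 1 ≤ i ≤ n − 1, and let μ ≥ 1 be a real number. Then (x₁ + x₂ + ⋯ + xₙ)^μ ≥ Σ_{i=1}^{n} (2^μ − 1)^{i−1} · xᵢ^μ. -/

import Mathlib

open Set

lemma incr_key (μ : ℝ) (hμ : 1 ≤ μ) {b c : ℝ} (hb : 0 ≤ b) (hbc : b ≤ c) :
    c ^ μ + (2 ^ μ - 1) * b ^ μ ≤ (b + c) ^ μ := by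
  have hc : 0 ≤ c := hb.trans hbc
  rcases eq_or_lt_of_le hb with hb0 | hb0
  · rw [← hb0]
    rw [Real.zero_rpow (by linarith : μ ≠ 0)]
    simp
  · have hc0 : 0 < c := lt_of_lt_of_le hb0 hbc
    have hconv := convexOn_rpow hμ
    set lam : ℝ := b / c with hl
    have hlam0 : 0 ≤ lam := div_nonneg hb hc
    have hlam1 : lam ≤ 1 := (div_le_one hc0).2 hbc
    have h1 := hconv.2 (mem_Ici.2 hb) (mem_Ici.2 (by linarith : (0:ℝ) ≤ b + c))
      (by linarith : 0 ≤ 1 - lam) hlam0 (by ring)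
    have h2 := hconv.2 (mem_Ici.2 hb) (mem_Ici.2 (by linarith : (0:ℝ) ≤ b + c))
      hlam0 (by linarith : 0 ≤ 1 - lam) (by ring)
    simp only [smul_eq_mul] at h1 h2
    have e1 : (1 - lam) * b + lam * (b + c) = 2 * b := by
      field_simp [hl]
      rw [hl]
      linear_combination div_mul_cancel₀ b hc0.ne'
    have e2 : lam * b + (1 - lam) * (b + c) = c := by
      field_simp [hl]
      rw [hl]
      linear_combination -(div_mul_cancel₀ b hc0.ne')
    rw [e1] at h1
    rw [e2] at h2
    have e3 : (2 * b) ^ μ = 2 ^ μ * b ^ μ := Real.mul_rpow (by norm_num) hb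
    nlinarith [h1, h2, e3]
lemma aux_tail (μ : ℝ) (hμ : 1 ≤ μ) :
    ∀ (m k : ℕ) (x : ℕ → ℝ), 1 ≤ k →
      (∀ i ∈ Finset.Icc k (k + m), 0 ≤ x i) →
      (∀ i, k ≤ i → i ≤ k + m - 1 → ∑ j ∈ Finset.Icc (i + 1) (k + m), x j ≤ x i) →
      ∑ i ∈ Finset.Icc k (k + m), (2 ^ μ - 1) ^ (i - k) * x i ^ μ ≤
        (∑ i ∈ Finset.Icc k (k + m), x i) ^ μ := by
  have hw : (0:ℝ) ≤ 2 ^ μ - 1 := by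
    have : (1:ℝ) ≤ 2 ^ μ := Real.one_le_rpow (by norm_num) (by linarith)
    linarith
  intro m
  induction m with
  | zero =>
    intro k x hk hx _
    simp
  | succ m ih =>
    intro k x hk hx hord
    have hsplit : Finset.Icc k (k + (m + 1)) = insert k (Finset.Icc (k + 1) (k + (m + 1))) :=
      (Finset.insert_Icc_add_one_left_eq_Icc (by omega)).symm
    -- tail facts
    have hx' : ∀ i ∈ Finset.Icc (k + 1) (k + 1 + m), 0 ≤ x i := by
      intro i hi
      exact hx i (by simp at hi ⊢; omega)
    have hord' : ∀ i, k + 1 ≤ i → i ≤ k + 1 + m - 1 →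
        ∑ j ∈ Finset.Icc (i + 1) (k + 1 + m), x j ≤ x i := by
      intro i h1 h2
      have := hord i (by omega) (by omega)
      convert this using 3
      omega
    have ihT := ih (k + 1) x (by omega) hx' hord'
    set T : ℝ := ∑ i ∈ Finset.Icc (k + 1) (k + (m + 1)), x i with hT
    have hTsum : ∑ i ∈ Finset.Icc (k + 1) (k + 1 + m), x i = T := by
      rw [hT]; congr 1; congr 1; omega
    have hT0 : 0 ≤ T := by
      rw [hT]
      apply Finset.sum_nonneg
      intro i hi
      exact hx i (by simp at hi ⊢; omega)
    have hTle : T ≤ x k := by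
      have := hord k (by omega) (by omega)
      rw [hT]; exact this
    have hxk : 0 ≤ x k := hx k (by simp)
    have key := incr_key μ hμ hT0 (hTle.trans (le_refl _))
    -- weighted tail
    have hwt : ∑ i ∈ Finset.Icc (k + 1) (k + (m + 1)), (2 ^ μ - 1) ^ (i - k) * x i ^ μ
        = (2 ^ μ - 1) * ∑ i ∈ Finset.Icc (k + 1) (k + 1 + m), (2 ^ μ - 1) ^ (i - (k + 1)) * x i ^ μ := by
      rw [Finset.mul_sum]
      rw [show k + (m + 1) = k + 1 + m by omega]
      apply Finset.sum_congr rfl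
      intro i hi
      simp only [Finset.mem_Icc] at hi
      rw [← mul_assoc, ← pow_succ']
      congr 2
      omega
    rw [hsplit, Finset.sum_insert (by simp), Finset.sum_insert (by simp)]
    rw [hwt, ← hT]
    calc (2 ^ μ - 1) ^ (k - k) * x k ^ μ +
          (2 ^ μ - 1) * ∑ i ∈ Finset.Icc (k + 1) (k + 1 + m), (2 ^ μ - 1) ^ (i - (k + 1)) * x i ^ μ
        ≤ x k ^ μ + (2 ^ μ - 1) * T ^ μ := by
          simp only [Nat.sub_self, pow_zero, one_mul]
          have := mul_le_mul_of_nonneg_left (hTsum ▸ ihT) hw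
          linarith
      _ ≤ (T + x k) ^ μ := key
      _ = (x k + T) ^ μ := by rw [add_comm]

theorem iterated_weighted_power_ge (n : ℕ) (hn : 1 ≤ n) (x : ℕ → ℝ) (μ : ℝ)
    (hx : ∀ i ∈ Finset.Icc 1 n, 0 ≤ x i)
    (hord : ∀ i, 1 ≤ i → i ≤ n - 1 → ∑ j ∈ Finset.Icc (i + 1) n, x j ≤ x i)
    (hμ : 1 ≤ μ) :
    (∑ i ∈ Finset.Icc 1 n, x i) ^ μ ≥
      ∑ i ∈ Finset.Icc 1 n, (2 ^ μ - 1) ^ (i - 1) * x i ^ μ := by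
  have h := aux_tail μ hμ (n - 1) 1 x le_rfl
  rw [show 1 + (n - 1) = n by omega] at h
  exact h hx hord
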